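/- Let ρ_O be a density operator on ℂ^{d_O} with largest eigenvalue o_1↓ and second-largest o_2↓, and let the reservoir Gibbs probabilities be r_m↓ = e^{-β λ_m↑}/Z with λ_1↑ ≤ ... ≤ λ_{d_R}↑. Then the maximum erasure probability p^max_{φ_1} = Σ_{m=1}^{d_R} p_m↓ (sum of the d_R largest products o_l↓ r_m↓) strictly exceeds o_1↓ if and only if o_2↓ r_1↓ > o_1↓ r_{d_R}↓, equivalently o_1↓/o_2↓ < e^{β(λ_{d_R}↑ − λ_1↑)}. -/

import Mathlib

open Finset

/-- The non-increasing rearrangement of a vector in `ℝ^n`. -/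
noncomputable def sortDesc {n : ℕ} (x : Fin n → ℝ) : Fin n → ℝ :=
  fun i => (x ∘ Tuple.sort x) i.rev

/-- If every element of `S` dominates every element outside `S`, then the sum over
any set `T` of the same cardinality is at most the sum over `S`. -/
lemma sum_le_sum_dominant {N : ℕ} (x : Fin N → ℝ) {S T : Finset (Fin N)}
    (hcard : T.card = S.card)
    (hdom : ∀ a ∈ S, ∀ b ∉ S, x b ≤ x a) :
    ∑ b ∈ T, x b ≤ ∑ a ∈ S, x a := by
  have hT : ∑ b ∈ T \ S, x b + ∑ b ∈ T ∩ S, x b = ∑ b ∈ T, x b := by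
    rw [← Finset.sdiff_inter_self_left T S]
    exact Finset.sum_sdiff (Finset.inter_subset_left)
  have hS : ∑ a ∈ S \ T, x a + ∑ a ∈ T ∩ S, x a = ∑ a ∈ S, x a := by
    rw [← Finset.sdiff_inter_self_left S T, Finset.inter_comm S T]
    exact Finset.sum_sdiff (by rw [Finset.inter_comm]; exact Finset.inter_subset_left)
  have hc1 : (T \ (T ∩ S)).card + (T ∩ S).card = T.card :=
    Finset.card_sdiff_add_card_eq_card Finset.inter_subset_left
  have hc2 : (S \ (S ∩ T)).card + (S ∩ T).card = S.card :=
    Finset.card_sdiff_add_card_eq_card Finset.inter_subset_left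
  rw [Finset.sdiff_inter_self_left] at hc1 hc2
  have hic : (S ∩ T).card = (T ∩ S).card := by rw [Finset.inter_comm]
  have hc : (T \ S).card = (S \ T).card := by omega
  have key : ∑ b ∈ T \ S, x b ≤ ∑ a ∈ S \ T, x a := by
    rcases (S \ T).eq_empty_or_nonempty with he | hne
    · have hTe : T \ S = ∅ := Finset.card_eq_zero.mp (by rw [hc, he]; simp)
      simp [he, hTe]
    · obtain ⟨c, hcm, hcv⟩ := Finset.exists_mem_eq_inf' hne x
      have h1 : ∑ b ∈ T \ S, x b ≤ (T \ S).card • ((S \ T).inf' hne x) :=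
        Finset.sum_le_card_nsmul _ _ _ (fun b hb => by
          rw [hcv]
          exact hdom c (Finset.mem_sdiff.mp hcm).1 b (Finset.mem_sdiff.mp hb).2)
      have h2 : (S \ T).card • ((S \ T).inf' hne x) ≤ ∑ a ∈ S \ T, x a :=
        Finset.card_nsmul_le_sum _ _ _ (fun a ha => Finset.inf'_le x ha)
      rw [hc] at h1
      linarith
  linarith

lemma card_filter_lt_fin {n k : ℕ} (h : k ≤ n) :
    (Finset.univ.filter fun i : Fin n => (i : ℕ) < k).card = k := by
  have heq : (Finset.univ.filter fun i : Fin n => (i : ℕ) < k)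
      = Finset.image (Fin.castLE h) Finset.univ := by
    ext a
    simp only [Finset.mem_filter, Finset.mem_univ, true_and, Finset.mem_image]
    constructor
    · intro ha; exact ⟨⟨a, ha⟩, rfl⟩
    · rintro ⟨b, rfl⟩; exact b.isLt
  rw [heq, Finset.card_image_of_injective _ (Fin.castLE_injective h), Finset.card_univ,
    Fintype.card_fin]

set_option maxHeartbeats 1000000 in
theorem nontrivial_erasure_condition {dO dR : ℕ} (hdO : 2 ≤ dO) (hdR : 0 < dR)
    (o : Fin dO → ℝ) (ho_anti : Antitone o) (ho_pos : ∀ l, 0 < o l)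
    (ho_sum : ∑ l, o l = 1)
    (lam : Fin dR → ℝ) (hlam : Monotone lam) (β : ℝ) (hβ : 0 < β)
    (r : Fin dR → ℝ)
    (hr : ∀ m, r m = Real.exp (-β * lam m) / ∑ k, Real.exp (-β * lam k))
    (pvec : Fin (dO * dR) → ℝ)
    (hpvec : ∀ n, pvec n = o (finProdFinEquiv.symm n).1 * r (finProdFinEquiv.symm n).2)
    (pmax : ℝ)
    (hpmax : pmax = ∑ m ∈ Finset.univ.filter (fun m : Fin (dO * dR) => (m : ℕ) < dR),
      sortDesc pvec m) :
    (pmax > o ⟨0, by omega⟩ ↔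
      o ⟨1, by omega⟩ * r ⟨0, hdR⟩ > o ⟨0, by omega⟩ * r ⟨dR - 1, by omega⟩) ∧
    (pmax > o ⟨0, by omega⟩ ↔
      o ⟨0, by omega⟩ / o ⟨1, by omega⟩
        < Real.exp (β * (lam ⟨dR - 1, by omega⟩ - lam ⟨0, hdR⟩))) := by
  have hdRN : dR ≤ dO * dR := Nat.le_mul_of_pos_left dR (by omega)
  set l0 : Fin dO := ⟨0, by omega⟩ with hl0
  set l1 : Fin dO := ⟨1, by omega⟩ with hl1
  set m0 : Fin dR := ⟨0, hdR⟩ with hm0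
  set mlast : Fin dR := ⟨dR - 1, by omega⟩ with hmlast
  haveI : Nonempty (Fin dR) := ⟨m0⟩
  have hZ : 0 < ∑ k, Real.exp (-β * lam k) :=
    Finset.sum_pos (fun k _ => Real.exp_pos _) Finset.univ_nonempty
  have hrpos : ∀ m, 0 < r m := fun m => by rw [hr]; positivity
  have hranti : Antitone r := by
    intro a b hab
    rw [hr, hr]
    rw [div_le_div_iff_of_pos_right hZ]
    exact Real.exp_le_exp.mpr (by nlinarith [hlam hab])
  have hrsum : ∑ m, r m = 1 := by
    simp only [hr]
    rw [← Finset.sum_div, div_self hZ.ne']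
  have hpvec' : ∀ p : Fin dO × Fin dR, pvec (finProdFinEquiv p) = o p.1 * r p.2 := by
    intro p; rw [hpvec]; simp
  -- the set of indices with object index 0
  set T0 : Finset (Fin (dO * dR)) :=
    Finset.image (fun m : Fin dR => finProdFinEquiv (l0, m)) Finset.univ with hT0
  have hg0 : Function.Injective (fun m : Fin dR => finProdFinEquiv (l0, m)) := by
    intro a b h
    have := finProdFinEquiv.injective h
    simpa using this
  have hT0card : T0.card = dR := by
    rw [hT0, Finset.card_image_of_injective _ hg0, Finset.card_univ, Fintype.card_fin]
  have hT0sum : ∑ a ∈ T0, pvec a = o l0 := by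
    rw [hT0, Finset.sum_image (fun a _ b _ h => hg0 h)]
    simp only [hpvec']
    rw [← Finset.mul_sum, hrsum, mul_one]
  -- the set of indices contributing to pmax
  set σ := Tuple.sort pvec with hσ
  have hfinj : Function.Injective (fun i : Fin (dO * dR) => σ (i.rev)) :=
    σ.injective.comp Fin.rev_injective
  set J : Finset (Fin (dO * dR)) :=
    Finset.image (fun i : Fin (dO * dR) => σ (i.rev))
      (Finset.univ.filter fun i : Fin (dO * dR) => (i : ℕ) < dR) with hJ
  have hJcard : J.card = dR := by
    rw [hJ, Finset.card_image_of_injective _ hfinj, card_filter_lt_fin hdRN]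
  have hJsum : ∑ a ∈ J, pvec a = pmax := by
    rw [hJ, Finset.sum_image (fun a _ b _ h => hfinj h), hpmax]
    rfl
  have hJdom : ∀ a ∈ J, ∀ b ∉ J, pvec b ≤ pvec a := by
    intro a ha b hb
    rw [hJ, Finset.mem_image] at ha
    obtain ⟨i, hi, rfl⟩ := ha
    simp only [Finset.mem_filter, Finset.mem_univ, true_and] at hi
    have hbj : b = σ (σ.symm b) := (σ.apply_symm_apply b).symm
    have hj : ((σ.symm b : Fin (dO * dR)) : ℕ) < dO * dR - dR := by
      by_contra hcon
      push_neg at hcon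
      apply hb
      rw [hJ, Finset.mem_image]
      refine ⟨(σ.symm b).rev, ?_, ?_⟩
      · simp only [Finset.mem_filter, Finset.mem_univ, true_and, Fin.val_rev]
        have := (σ.symm b).isLt
        omega
      · show σ (σ.symm b).rev.rev = b
        rw [Fin.rev_rev, σ.apply_symm_apply]
    have hle : σ.symm b ≤ i.rev := by
      rw [Fin.le_def, Fin.val_rev]
      have := i.isLt
      omega
    have := Tuple.monotone_sort pvec hle
    rw [← hσ] at this
    simpa [Function.comp, ← hbj] using this
  -- always pmax ≥ o l0
  have hge : o l0 ≤ pmax := by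
    have := sum_le_sum_dominant pvec (hT0card.trans hJcard.symm) hJdom
    rw [hT0sum, hJsum] at this
    exact this
  -- forward: pmax > o l0 → o l1 * r m0 > o l0 * r mlast
  have key1 : pmax > o l0 ↔ o l1 * r m0 > o l0 * r mlast := by
    constructor
    · intro h
      by_contra hc
      push_neg at hc
      have hT0dom : ∀ a ∈ T0, ∀ b ∉ T0, pvec b ≤ pvec a := by
        intro a ha b hb
        rw [hT0, Finset.mem_image] at ha
        obtain ⟨m', _, rfl⟩ := ha
        rw [hpvec' (l0, m')]
        have hb1 : 1 ≤ ((finProdFinEquiv.symm b).1 : Fin dO).val := by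
          by_contra hcon
          push_neg at hcon
          apply hb
          rw [hT0, Finset.mem_image]
          refine ⟨(finProdFinEquiv.symm b).2, Finset.mem_univ _, ?_⟩
          have h1 : (finProdFinEquiv.symm b).1 = l0 := by
            apply Fin.ext; simp only [hl0]; omega
          rw [← h1]
          exact finProdFinEquiv.apply_symm_apply b
        rw [hpvec b]
        calc o (finProdFinEquiv.symm b).1 * r (finProdFinEquiv.symm b).2
            ≤ o l1 * r m0 := by
              apply mul_le_mul
              · exact ho_anti (by rw [Fin.le_def]; simpa using hb1)
              · exact hranti (by rw [Fin.le_def]; simp [hm0])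
              · exact (hrpos _).le
              · exact (ho_pos _).le
          _ ≤ o l0 * r mlast := hc
          _ ≤ o l0 * r m' := by
              apply mul_le_mul_of_nonneg_left _ (ho_pos _).le
              apply hranti
              rw [Fin.le_def]
              simp only [hmlast]
              have := m'.isLt
              omega
      have := sum_le_sum_dominant pvec (hJcard.trans hT0card.symm) hT0dom
      rw [hT0sum, hJsum] at this
      linarith
    · intro hcond
      -- build a competitor set with sum > o l0
      have hsum' : ∑ m ∈ Finset.univ.filter (fun m : Fin dR => (m : ℕ) < dR - 1), r m
          = 1 - r mlast := by
        have hfl : (Finset.univ.filter fun m : Fin dR => (m : ℕ) < dR - 1)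
            = Finset.univ.erase mlast := by
          ext m
          simp only [Finset.mem_filter, Finset.mem_univ, true_and, Finset.mem_erase,
            and_true, Ne, Fin.ext_iff, hmlast]
          have := m.isLt
          omega
        rw [hfl]
        have h := Finset.add_sum_erase Finset.univ r (Finset.mem_univ mlast)
        rw [hrsum] at h
        linarith
      set T0' : Finset (Fin (dO * dR)) :=
        Finset.image (fun m : Fin dR => finProdFinEquiv (l0, m))
          (Finset.univ.filter fun m : Fin dR => (m : ℕ) < dR - 1) with hT0'
      have hb1mem : finProdFinEquiv (l1, m0) ∉ T0' := by
        rw [hT0', Finset.mem_image]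
        rintro ⟨m, _, hm⟩
        have := finProdFinEquiv.injective hm
        rw [Prod.ext_iff] at this
        have h1 : l0 = l1 := this.1
        rw [Fin.ext_iff] at h1
        simp [hl0, hl1] at h1
      set T' : Finset (Fin (dO * dR)) := insert (finProdFinEquiv (l1, m0)) T0' with hT'
      have hT'card : T'.card = dR := by
        rw [hT', Finset.card_insert_of_notMem hb1mem, hT0',
          Finset.card_image_of_injective _ hg0, card_filter_lt_fin (by omega : dR - 1 ≤ dR)]
        omega
      have hT'sum : ∑ a ∈ T', pvec a = o l1 * r m0 + o l0 * (1 - r mlast) := by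
        rw [hT', Finset.sum_insert hb1mem, hT0',
          Finset.sum_image (fun a _ b _ h => hg0 h), hpvec' (l1, m0)]
        simp only [hpvec']
        rw [← Finset.mul_sum, hsum']
      have hcmp := sum_le_sum_dominant pvec (hT'card.trans hJcard.symm) hJdom
      rw [hT'sum, hJsum] at hcmp
      linarith
  refine ⟨key1, key1.trans ?_⟩
  have hE : Real.exp (β * (lam mlast - lam m0)) = r m0 / r mlast := by
    have h1 : r m0 / r mlast = Real.exp (-β * lam m0) / Real.exp (-β * lam mlast) := by
      rw [hr, hr, div_div_div_comm, div_self hZ.ne', div_one]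
    rw [h1, ← Real.exp_sub]
    congr 1
    ring
  rw [hE, gt_iff_lt, div_lt_div_iff₀ (ho_pos l1) (hrpos mlast)]
  constructor
  · intro h; linarith
  · intro h; linarith
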